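/- arXiv:2206.03551 — 2 statements merged into one kernel-verified Lean document; each statement's English description precedes it below -/
import Mathlib

section
/- Let X ⊂ ℝ^{d_x} and Y ⊂ ℝ^{d_y} be compact sets equipped with Lebesgue measure, let U be a compact subset of L²(X; ℝ^{d_u}), and let G : L²(X; ℝ^{d_u}) → L²(Y; ℝ^{d_s}) be any map. Let F = D ∘ A ∘ E, where E : L²(X; ℝ^{d_u}) → ℝ^p and A : ℝ^p → ℝ^n are arbitrary maps and D : ℝ^n → L²(Y; ℝ^{d_s}) is a linear map. Then sup_{u ∈ U} ‖F(u) − G(u)‖_{L²(Y)} ≥ d_n(G(U)), where d_n denotes the Kolmogorov n-width. -/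
open MeasureTheory ENNReal

/-- **Kolmogorov n-width lower bound for linear decoders (uniform norm).**
If `F = D ∘ A ∘ E` with `D` linear, then the uniform error over a compact set `U`
of input functions is bounded below by the Kolmogorov `n`-width of `G(U)`. -/
theorem uniform_error_ge_kolmogorov_n_width
    {dx dy du ds : ℕ} {p n : ℕ}
    (X : Set (EuclideanSpace ℝ (Fin dx))) (Y : Set (EuclideanSpace ℝ (Fin dy)))
    (hX : IsCompact X) (hY : IsCompact Y)
    (U : Set (Lp (EuclideanSpace ℝ (Fin du)) 2 (volume.restrict X)))
    (hU : IsCompact U)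
    (G : Lp (EuclideanSpace ℝ (Fin du)) 2 (volume.restrict X) →
         Lp (EuclideanSpace ℝ (Fin ds)) 2 (volume.restrict Y))
    (E : Lp (EuclideanSpace ℝ (Fin du)) 2 (volume.restrict X) → (Fin p → ℝ))
    (A : (Fin p → ℝ) → (Fin n → ℝ))
    (D : (Fin n → ℝ) →ₗ[ℝ] Lp (EuclideanSpace ℝ (Fin ds)) 2 (volume.restrict Y)) :
    (⨆ u ∈ U, (‖D (A (E u)) - G u‖₊ : ℝ≥0∞)) ≥
      ⨅ (V : Submodule ℝ (Lp (EuclideanSpace ℝ (Fin ds)) 2 (volume.restrict Y)))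
        (_ : Module.rank ℝ V ≤ (n : Cardinal)),
        ⨆ s ∈ G '' U, ⨅ v ∈ (V : Set (Lp (EuclideanSpace ℝ (Fin ds)) 2 (volume.restrict Y))),
          (‖s - v‖₊ : ℝ≥0∞) := by
  have hrank : Module.rank ℝ (LinearMap.range D) ≤ (n : Cardinal) := by
    simpa using (LinearMap.rank_le_domain D)
  refine le_trans (iInf₂_le (LinearMap.range D) hrank) ?_
  rw [iSup_image]
  refine iSup₂_le fun u hu => ?_
  have hmem : D (A (E u)) ∈ (LinearMap.range D : Set _) := ⟨A (E u), rfl⟩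
  refine le_trans (biInf_le _ hmem) ?_
  rw [show ‖G u - D (A (E u))‖₊ = ‖D (A (E u)) - G u‖₊ by rw [← neg_sub, nnnorm_neg]]
  exact le_iSup₂ (f := fun u (_ : u ∈ U) => (‖D (A (E u)) - G u‖₊ : ℝ≥0∞)) u hu
end

section
/- Fix 0 < t₀ < T, and for t ∈ [t₀, T] let u_t = 2π t cos(2π t ·) ∈ L²([0,1]; ℝ) and s_t = sin(2π t ·) ∈ L²([0,1]; ℝ). Then for every n, p ∈ ℕ, every linear map D : ℝ^n → L²([0,1]; ℝ), and every pairing of maps E : L²([0,1]; ℝ) → ℝ^p and A : ℝ^p → ℝ^n, there exists t ∈ [t₀, T] such that D(A(E(u_t))) ≠ s_t in L²([0,1]; ℝ). In other words, no operator learning architecture with a finite-dimensional linear decoder can exactly reproduce the antiderivative operator on this family of inputs. -/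
open MeasureTheory Real

noncomputable section

lemma isFiniteMeasure_Icc01 : IsFiniteMeasure (volume.restrict (Set.Icc (0:ℝ) 1)) := by
  constructor
  rw [Measure.restrict_apply_univ, Real.volume_Icc]
  exact ENNReal.ofReal_lt_top

lemma memℒp_sin (t : ℝ) :
    MemLp (fun x : ℝ => Real.sin (2 * π * t * x)) 2 (volume.restrict (Set.Icc (0:ℝ) 1)) := by
  haveI := isFiniteMeasure_Icc01
  refine MemLp.of_bound ?_ 1 ?_
  · exact (Real.continuous_sin.comp (continuous_const.mul continuous_id)).aestronglyMeasurable
  · refine Filter.Eventually.of_forall fun x => ?_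
    rw [Real.norm_eq_abs]
    exact Real.abs_sin_le_one _

lemma memℒp_u (t : ℝ) :
    MemLp (fun x : ℝ => 2 * π * t * Real.cos (2 * π * t * x)) 2
      (volume.restrict (Set.Icc (0:ℝ) 1)) := by
  haveI := isFiniteMeasure_Icc01
  refine MemLp.of_bound ?_ (|2 * π * t|) ?_
  · exact (continuous_const.mul
      (Real.continuous_cos.comp (continuous_const.mul continuous_id))).aestronglyMeasurable
  · refine Filter.Eventually.of_forall fun x => ?_
    rw [Real.norm_eq_abs, abs_mul]
    calc |2 * π * t| * |Real.cos (2 * π * t * x)| ≤ |2 * π * t| * 1 :=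
          mul_le_mul_of_nonneg_left (Real.abs_cos_le_one _) (abs_nonneg _)
      _ = |2 * π * t| := mul_one _

/-- The element of `L²([0,1]; ℝ)` represented by `x ↦ sin (2π t x)`,
the antiderivative (vanishing at `0`) of `u_t`. -/
def sinL2 (t : ℝ) : Lp ℝ 2 (volume.restrict (Set.Icc (0:ℝ) 1)) :=
  (memℒp_sin t).toLp (fun x : ℝ => Real.sin (2 * π * t * x))

/-- The element of `L²([0,1]; ℝ)` represented by `x ↦ 2π t cos (2π t x)`. -/
def uL2 (t : ℝ) : Lp ℝ 2 (volume.restrict (Set.Icc (0:ℝ) 1)) :=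
  (memℒp_u t).toLp (fun x : ℝ => 2 * π * t * Real.cos (2 * π * t * x))

/-! ### Auxiliary lemmas -/

/-- The additive character `x ↦ exp (a x i)` of `ℝ`, as a monoid hom on `Multiplicative ℝ`. -/
def expChar (a : ℝ) : Multiplicative ℝ →* ℂ where
  toFun x := Complex.exp (a * (Multiplicative.toAdd x : ℝ) * Complex.I)
  map_one' := by simp
  map_mul' x y := by
    simp only [toAdd_mul]
    rw [← Complex.exp_add]
    push_cast
    ring_nf

lemma expChar_apply (a x : ℝ) :
    expChar a (Multiplicative.ofAdd x) = Complex.exp (a * x * Complex.I) := rfl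

lemma expChar_injective : Function.Injective expChar := by
  intro a b hab
  by_contra hne
  have hx := congrArg (fun f : Multiplicative ℝ →* ℂ =>
    f (Multiplicative.ofAdd (π / (a - b)))) hab
  simp only [expChar_apply] at hx
  have hab' : a - b ≠ 0 := sub_ne_zero.mpr hne
  push_cast at hx
  have hab'' : ((a : ℂ) - b) ≠ 0 := by
    exact_mod_cast (Complex.ofReal_ne_zero.mpr hab')
  have h1 : Complex.exp ((a : ℂ) * ((π : ℂ) / ((a : ℂ) - b)) * Complex.I
      - (b : ℂ) * ((π : ℂ) / ((a : ℂ) - b)) * Complex.I) = 1 := by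
    rw [Complex.exp_sub, hx, div_self (Complex.exp_ne_zero _)]
  have h2 : (a : ℂ) * ((π : ℂ) / ((a : ℂ) - b)) * Complex.I
      - (b : ℂ) * ((π : ℂ) / ((a : ℂ) - b)) * Complex.I = π * Complex.I := by
    field_simp
  rw [h2, Complex.exp_pi_mul_I] at h1
  norm_num at h1

/-- Linear independence (over consecutive derivatives / characters) of
`x ↦ sin (aᵢ x)` for distinct positive frequencies, assuming the combination
vanishes on `(0,1)` only. -/
lemma sin_indep {m : ℕ} (a : Fin m → ℝ) (hpos : ∀ i, 0 < a i)
    (hinj : Function.Injective a) (c : Fin m → ℝ)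
    (h : ∀ x ∈ Set.Ioo (0:ℝ) 1, ∑ i, c i * Real.sin (a i * x) = 0) :
    ∀ i, c i = 0 := by
  classical
  set b : Fin m ⊕ Fin m → ℝ := Sum.elim a fun i => -a i with hb
  have hbinj : Function.Injective b := by
    rintro (i | i) (j | j) hij <;>
      simp only [hb, Sum.elim_inl, Sum.elim_inr] at hij
    · exact congrArg Sum.inl (hinj hij)
    · exact absurd hij (by nlinarith [hpos i, hpos j])
    · exact absurd hij (by nlinarith [hpos i, hpos j])
    · exact congrArg Sum.inr (hinj (neg_injective hij))
  set g : Fin m ⊕ Fin m → ℂ :=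
    Sum.elim (fun i => (c i : ℂ) * (-Complex.I / 2)) (fun i => (c i : ℂ) * (Complex.I / 2))
    with hg
  set H : ℝ → ℂ := fun x => ∑ j, g j * Complex.exp (b j * x * Complex.I) with hH
  have key : ∀ x : ℝ, H x = ((∑ i, c i * Real.sin (a i * x) : ℝ) : ℂ) := by
    intro x
    rw [hH]
    push_cast
    rw [Fintype.sum_sum_type, ← Finset.sum_add_distrib]
    refine Finset.sum_congr rfl fun i _ => ?_
    simp only [hg, hb, Sum.elim_inl, Sum.elim_inr, Complex.ofReal_sin]
    simp only [Complex.sin]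
    push_cast
    ring
  have hHanal : AnalyticOnNhd ℝ H Set.univ := by
    intro x _
    refine Finset.analyticAt_fun_sum _ fun j _ => ?_
    have hlin : AnalyticAt ℝ (fun x : ℝ => (b j : ℂ) * x * Complex.I) x := by
      exact ((analyticAt_const.mul (Complex.ofRealCLM.analyticAt x)).mul analyticAt_const)
    exact analyticAt_const.mul ((analyticAt_cexp.restrictScalars).comp hlin)
  have hH0 : ∀ x : ℝ, H x = 0 := by
    have hev : H =ᶠ[nhds (1 / 2 : ℝ)] 0 := by
      filter_upwards [isOpen_Ioo.mem_nhds (show (1 / 2 : ℝ) ∈ Set.Ioo 0 1 by norm_num)]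
        with x hx
      rw [key x, h x hx]
      simp
    have := hHanal.eqOn_zero_of_preconnected_of_eventuallyEq_zero isPreconnected_univ
      (Set.mem_univ (1 / 2 : ℝ)) hev
    exact fun x => this (Set.mem_univ x)
  have li : LinearIndependent ℂ
      ((fun f : Multiplicative ℝ →* ℂ => (f : Multiplicative ℝ → ℂ)) ∘ (expChar ∘ b)) :=
    (linearIndependent_monoidHom (Multiplicative ℝ) ℂ).comp (expChar ∘ b)
      (expChar_injective.comp hbinj)
  have hsum : ∑ j, g j • ((fun f : Multiplicative ℝ →* ℂ => (f : Multiplicative ℝ → ℂ))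
      ∘ (expChar ∘ b)) j = 0 := by
    funext x
    have hx := hH0 (Multiplicative.toAdd x)
    simp only [hH] at hx
    simpa [Function.comp, expChar, MonoidHom.coe_mk, OneHom.coe_mk, Finset.sum_apply,
      Pi.smul_apply, smul_eq_mul] using hx
  have hzero := Fintype.linearIndependent_iff.mp li g hsum
  intro i
  have h0 := hzero (Sum.inl i)
  simp only [hg, Sum.elim_inl] at h0
  have hci : (c i : ℂ) = 0 := by
    rcases mul_eq_zero.mp h0 with h' | h'
    · exact h'
    · exact absurd h' (by simp [Complex.I_ne_zero])
  exact_mod_cast hci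

lemma Lp_coeFn_finset_sum {ι : Type*} (s : Finset ι)
    (F : ι → Lp ℝ 2 (volume.restrict (Set.Icc (0:ℝ) 1))) :
    ⇑(∑ i ∈ s, F i) =ᵐ[volume.restrict (Set.Icc (0:ℝ) 1)] fun x => ∑ i ∈ s, F i x := by
  classical
  induction s using Finset.induction_on with
  | empty =>
      simp only [Finset.sum_empty]
      exact Lp.coeFn_zero ℝ 2 (volume.restrict (Set.Icc (0:ℝ) 1))
  | insert a s' hnot ih =>
      rw [Finset.sum_insert hnot]
      filter_upwards [Lp.coeFn_add (F a) (∑ i ∈ s', F i), ih] with x h1 h2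
      rw [Finset.sum_insert hnot, h1, Pi.add_apply, h2]

/-- **No architecture with a finite-dimensional linear decoder reproduces the
antiderivative operator on the family `u_t = 2π t cos(2π t ·)`, `t ∈ [t₀, T]`.**
For any encoder `E`, approximator `A`, and linear decoder `D : ℝⁿ → L²([0,1]; ℝ)`,
there is some `t ∈ [t₀, T]` with `D(A(E(u_t))) ≠ sin(2π t ·)`. -/
theorem linear_decoder_cannot_reproduce_antiderivative
    (t₀ T : ℝ) (ht₀ : 0 < t₀) (hT : t₀ < T) (n p : ℕ)
    (D : (Fin n → ℝ) →ₗ[ℝ] Lp ℝ 2 (volume.restrict (Set.Icc (0:ℝ) 1)))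
    (E : Lp ℝ 2 (volume.restrict (Set.Icc (0:ℝ) 1)) → (Fin p → ℝ))
    (A : (Fin p → ℝ) → (Fin n → ℝ)) :
    ∃ t ∈ Set.Icc t₀ T, D (A (E (uL2 t))) ≠ sinL2 t := by
  by_contra hcon
  push_neg at hcon
  have hTt : (0 : ℝ) < T - t₀ := sub_pos.mpr hT
  set t : Fin (n + 1) → ℝ := fun i => t₀ + (T - t₀) * (i : ℕ) / (n + 1) with ht
  have hmem : ∀ i, t i ∈ Set.Icc t₀ T := by
    intro i
    constructor
    · have h0 : (0:ℝ) ≤ (T - t₀) * (i : ℕ) / (n + 1) := by positivity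
      simp only [ht]; linarith
    · have hi : ((i : ℕ) : ℝ) ≤ n := by exact_mod_cast Fin.is_le i
      have h1 : (T - t₀) * (i : ℕ) / (n + 1) ≤ T - t₀ := by
        rw [div_le_iff₀ (by positivity)]
        nlinarith
      simp only [ht]; linarith
  have htinj : Function.Injective t := by
    intro i j hij
    simp only [ht] at hij
    have h2 := add_left_cancel hij
    have h3 : ((i : ℕ) : ℝ) = ((j : ℕ) : ℝ) := by
      have hne : (T - t₀) ≠ 0 := ne_of_gt hTt
      have hne2 : ((n : ℝ) + 1) ≠ 0 := by positivity
      rw [div_left_inj' hne2] at h2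
      exact mul_left_cancel₀ hne h2
    exact Fin.ext (Nat.cast_injective h3)
  have htpos : ∀ i, 0 < t i := fun i => lt_of_lt_of_le ht₀ (hmem i).1
  -- linear independence of the family `sinL2 (t i)`
  have hv : LinearIndependent ℝ (fun i => sinL2 (t i)) := by
    rw [Fintype.linearIndependent_iff]
    intro c hc
    have hterm : ∀ i : Fin (n + 1),
        ⇑(c i • sinL2 (t i)) =ᵐ[volume.restrict (Set.Icc (0:ℝ) 1)] fun x => c i * Real.sin (2 * π * t i * x) := by
      intro i
      filter_upwards [Lp.coeFn_smul (c i) (sinL2 (t i)), (memℒp_sin (t i)).coeFn_toLp]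
        with x h1 h2
      rw [h1]
      simp only [Pi.smul_apply, smul_eq_mul]
      have h2' : ⇑(sinL2 (t i)) x = Real.sin (2 * π * t i * x) := h2
      rw [h2']
    have h2 : ⇑(∑ i, c i • sinL2 (t i)) =ᵐ[volume.restrict (Set.Icc (0:ℝ) 1)]
        fun x => ∑ i, c i * Real.sin (2 * π * t i * x) := by
      have hall : ∀ᵐ x ∂(volume.restrict (Set.Icc (0:ℝ) 1)), ∀ i, (c i • sinL2 (t i)) x = c i * Real.sin (2 * π * t i * x) :=
        MeasureTheory.ae_all_iff.mpr hterm
      filter_upwards [Lp_coeFn_finset_sum Finset.univ (fun i => c i • sinL2 (t i)), hall]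
        with x h1 h2
      rw [h1]
      exact Finset.sum_congr rfl fun i _ => h2 i
    have h3 : ⇑(∑ i, c i • sinL2 (t i)) =ᵐ[volume.restrict (Set.Icc (0:ℝ) 1)] (0 : ℝ → ℝ) := by
      rw [hc]
      exact Lp.coeFn_zero ℝ 2 (volume.restrict (Set.Icc (0:ℝ) 1))
    have h1 : (fun x => ∑ i, c i * Real.sin (2 * π * t i * x)) =ᵐ[volume.restrict (Set.Icc (0:ℝ) 1)] (0 : ℝ → ℝ) :=
      h2.symm.trans h3
    have h5 : (fun x => ∑ i, c i * Real.sin (2 * π * t i * x))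
        =ᵐ[volume.restrict (Set.Ioo (0:ℝ) 1)] (0 : ℝ → ℝ) :=
      ae_restrict_of_ae_restrict_of_subset Set.Ioo_subset_Icc_self h1
    have hcont : ContinuousOn (fun x => ∑ i, c i * Real.sin (2 * π * t i * x))
        (Set.Ioo (0:ℝ) 1) := by
      refine Continuous.continuousOn ?_
      exact continuous_finset_sum _ fun i _ =>
        continuous_const.mul (Real.continuous_sin.comp (continuous_const.mul continuous_id))
    have h4 : Set.EqOn (fun x => ∑ i, c i * Real.sin (2 * π * t i * x)) 0 (Set.Ioo 0 1) :=
      Measure.eqOn_open_of_ae_eq h5 isOpen_Ioo hcont continuousOn_const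
    have hainj : Function.Injective fun i => 2 * π * t i := by
      intro i j hij
      exact htinj (mul_left_cancel₀ (by positivity : (2 : ℝ) * π ≠ 0) hij)
    have hapos : ∀ i, 0 < 2 * π * t i := fun i => by
      have := htpos i
      positivity
    exact sin_indep (fun i => 2 * π * t i) hapos hainj c fun x hx => h4 hx
  -- each `sinL2 (t i)` lies in the range of `D`
  have hw : ∀ i, sinL2 (t i) ∈ LinearMap.range D := fun i =>
    ⟨A (E (uL2 (t i))), hcon (t i) (hmem i)⟩
  have hindep2 : LinearIndependent ℝ
      (fun i => (⟨sinL2 (t i), hw i⟩ : LinearMap.range D)) :=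
    LinearIndependent.of_comp (LinearMap.range D).subtype hv
  have hcard := hindep2.fintype_card_le_finrank
  have hle : Module.finrank ℝ (LinearMap.range D) ≤ n := by
    have h6 := LinearMap.finrank_range_le D
    simpa [Module.finrank_fintype_fun_eq_card] using h6
  rw [Fintype.card_fin] at hcard
  omega

end
end
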